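/- Let (S,d) be a complete separable metric space and let M ⊆ M(S) be a set of finite signed Borel measures such that sup_{μ ∈ M} ‖μ‖_TV < ∞ and M is uniformly tight. Then the σ(M(S), BL(S))-weak topology and the topology induced by the norm ‖·‖*_BL coincide on M. -/

import Mathlib

open MeasureTheory Filter Topology

/-- A function is bounded Lipschitz. -/
def IsBL {S : Type*} [PseudoMetricSpace S] (f : S → ℝ) : Prop :=
  (∃ C : ℝ, ∀ x, |f x| ≤ C) ∧ ∃ K : NNReal, LipschitzWith K f

/-- Pairing of a finite signed Borel measure with a function, via the Jordan decomposition. -/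
noncomputable def pairing {S : Type*} [MeasurableSpace S] (μ : SignedMeasure S) (f : S → ℝ) : ℝ :=
  (∫ x, f x ∂μ.toJordanDecomposition.posPart) - ∫ x, f x ∂μ.toJordanDecomposition.negPart

/-- Total variation norm of a finite signed measure. -/
noncomputable def tvNorm {S : Type*} [MeasurableSpace S] (μ : SignedMeasure S) : ℝ :=
  (μ.totalVariation Set.univ).toReal

/-- Dual bounded Lipschitz norm on signed measures. -/
noncomputable def blDualNorm {S : Type*} [PseudoMetricSpace S] [MeasurableSpace S]
    (μ : SignedMeasure S) : ℝ :=
  sSup {r : ℝ | ∃ (f : S → ℝ) (C : ℝ) (K : NNReal), (∀ x, |f x| ≤ C) ∧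
    LipschitzWith K f ∧ C + (K : ℝ) ≤ 1 ∧ r = |pairing μ f|}

/-- The `σ(M(S), BL(S))`-weak topology on `M(S)`: the coarsest topology making
`μ ↦ ⟨μ, f⟩` continuous for every bounded Lipschitz `f`. -/
noncomputable def weakTop (S : Type*) [PseudoMetricSpace S] [MeasurableSpace S] :
    TopologicalSpace (SignedMeasure S) :=
  ⨅ f : {g : S → ℝ // IsBL g},
    TopologicalSpace.induced (fun μ : SignedMeasure S => pairing μ f.1) inferInstance

/-- The topology on `M(S)` induced by the norm `‖·‖*_BL`, generated by the open balls. -/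
noncomputable def normTop (S : Type*) [PseudoMetricSpace S] [MeasurableSpace S] :
    TopologicalSpace (SignedMeasure S) :=
  TopologicalSpace.generateFrom
    {B | ∃ (μ : SignedMeasure S) (ε : ℝ), 0 < ε ∧ B = {ν | blDualNorm (ν - μ) < ε}}


set_option linter.unusedSectionVars false
set_option linter.unusedVariables false

section Aux
variable {S : Type*} [MeasurableSpace S]

lemma integ_aux [TopologicalSpace S] [BorelSpace S] {f : S → ℝ} {C : ℝ} (hb : ∀ x, |f x| ≤ C)
    (hf : Continuous f) (m : Measure S) [IsFiniteMeasure m] : Integrable f m := by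
  refine ⟨hf.aestronglyMeasurable, ?_⟩
  apply MeasureTheory.HasFiniteIntegral.of_bounded (C := C)
  filter_upwards with x
  simpa [Real.norm_eq_abs] using hb x

lemma signed_apply (μ : SignedMeasure S) {A : Set S} (hA : MeasurableSet A) :
    μ A = (μ.toJordanDecomposition.posPart A).toReal
        - (μ.toJordanDecomposition.negPart A).toReal := by
  conv_lhs => rw [← μ.toSignedMeasure_toJordanDecomposition]
  rw [JordanDecomposition.toSignedMeasure, Measure.toSignedMeasure_sub_apply hA]
  rfl

lemma jordan_add (μ ν : SignedMeasure S) :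
    (μ + ν).toJordanDecomposition.posPart + μ.toJordanDecomposition.negPart
      + ν.toJordanDecomposition.negPart
    = μ.toJordanDecomposition.posPart + ν.toJordanDecomposition.posPart
      + (μ + ν).toJordanDecomposition.negPart := by
  ext A hA
  have h1 := signed_apply (μ + ν) hA
  have h2 := signed_apply μ hA
  have h3 := signed_apply ν hA
  have h4 : (μ + ν) A = μ A + ν A := VectorMeasure.add_apply μ ν A
  simp only [Measure.add_apply]
  rw [← ENNReal.toReal_eq_toReal_iff' (by finiteness) (by finiteness),
    ENNReal.toReal_add (by finiteness) (by finiteness),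
    ENNReal.toReal_add (by finiteness) (by finiteness),
    ENNReal.toReal_add (by finiteness) (by finiteness),
    ENNReal.toReal_add (by finiteness) (by finiteness)]
  linarith

end Aux

section Pairing
variable {S : Type*} [MeasurableSpace S] [TopologicalSpace S] [BorelSpace S]

lemma pairing_add_left (μ ν : SignedMeasure S) {f : S → ℝ} {C : ℝ} (hb : ∀ x, |f x| ≤ C)
    (hf : Continuous f) : pairing (μ + ν) f = pairing μ f + pairing ν f := by
  have key := congrArg (fun m : Measure S => ∫ x, f x ∂m) (jordan_add μ ν)
  simp only [integral_add_measure (integ_aux hb hf _) (integ_aux hb hf _),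
    integral_add_measure ((integ_aux hb hf _).add_measure (integ_aux hb hf _)) (integ_aux hb hf _)] at key
  unfold pairing
  linarith

lemma pairing_neg (μ : SignedMeasure S) (f : S → ℝ) : pairing (-μ) f = - pairing μ f := by
  unfold pairing
  rw [SignedMeasure.toJordanDecomposition_neg, JordanDecomposition.neg_posPart,
    JordanDecomposition.neg_negPart]
  ring

lemma pairing_sub_left (μ ν : SignedMeasure S) {f : S → ℝ} {C : ℝ} (hb : ∀ x, |f x| ≤ C)
    (hf : Continuous f) : pairing (μ - ν) f = pairing μ f - pairing ν f := by
  rw [sub_eq_add_neg, pairing_add_left _ _ hb hf, pairing_neg]; ring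

lemma tvNorm_eq (μ : SignedMeasure S) : tvNorm μ
    = (μ.toJordanDecomposition.posPart Set.univ).toReal
    + (μ.toJordanDecomposition.negPart Set.univ).toReal := by
  rw [tvNorm, SignedMeasure.totalVariation, Measure.add_apply,
    ENNReal.toReal_add (by finiteness) (by finiteness)]

lemma pairing_abs_le (μ : SignedMeasure S) {f : S → ℝ} {C : ℝ} (hb : ∀ x, |f x| ≤ C)
    (hf : Continuous f) (hC : C ≤ 1) : |pairing μ f| ≤ tvNorm μ := by
  have h1 : ‖∫ x, f x ∂μ.toJordanDecomposition.posPart‖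
      ≤ C * (μ.toJordanDecomposition.posPart Set.univ).toReal :=
    norm_integral_le_of_norm_le_const (by filter_upwards with x; simpa [Real.norm_eq_abs] using hb x)
  have h2 : ‖∫ x, f x ∂μ.toJordanDecomposition.negPart‖
      ≤ C * (μ.toJordanDecomposition.negPart Set.univ).toReal :=
    norm_integral_le_of_norm_le_const (by filter_upwards with x; simpa [Real.norm_eq_abs] using hb x)
  rw [Real.norm_eq_abs] at h1 h2
  have hp : (0:ℝ) ≤ (μ.toJordanDecomposition.posPart Set.univ).toReal := ENNReal.toReal_nonneg
  have hn : (0:ℝ) ≤ (μ.toJordanDecomposition.negPart Set.univ).toReal := ENNReal.toReal_nonneg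
  rw [tvNorm_eq]
  have := abs_sub (pairing μ f)
  unfold pairing
  calc |∫ x, f x ∂μ.toJordanDecomposition.posPart - ∫ x, f x ∂μ.toJordanDecomposition.negPart|
      ≤ |∫ x, f x ∂μ.toJordanDecomposition.posPart| + |∫ x, f x ∂μ.toJordanDecomposition.negPart| :=
        abs_sub _ _
    _ ≤ _ := by nlinarith

end Pairing

section BL
variable {S : Type*} [MetricSpace S] [MeasurableSpace S] [BorelSpace S]

def blSet (μ : SignedMeasure S) : Set ℝ :=
  {r : ℝ | ∃ (f : S → ℝ) (C : ℝ) (K : NNReal), (∀ x, |f x| ≤ C) ∧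
    LipschitzWith K f ∧ C + (K : ℝ) ≤ 1 ∧ r = |pairing μ f|}

lemma blDualNorm_def (μ : SignedMeasure S) : blDualNorm μ = sSup (blSet μ) := rfl

lemma blSet_le (μ : SignedMeasure S) : ∀ r ∈ blSet μ, r ≤ tvNorm μ := by
  rintro r ⟨f, C, K, hb, hl, hCK, rfl⟩
  exact pairing_abs_le μ hb hl.continuous (by have hK := K.coe_nonneg; linarith)

lemma blSet_bdd (μ : SignedMeasure S) : BddAbove (blSet μ) := ⟨tvNorm μ, blSet_le μ⟩

lemma zero_mem_blSet (μ : SignedMeasure S) : (0:ℝ) ∈ blSet μ := by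
  refine ⟨fun _ => 0, 0, 0, fun x => by simp, LipschitzWith.const' 0, by simp, ?_⟩
  simp [pairing]

lemma blDualNorm_nonneg (μ : SignedMeasure S) : 0 ≤ blDualNorm μ :=
  le_csSup (blSet_bdd μ) (zero_mem_blSet μ)

lemma abs_pairing_le_blDualNorm (μ : SignedMeasure S) {f : S → ℝ} {C : ℝ} {K : NNReal}
    (hb : ∀ x, |f x| ≤ C) (hl : LipschitzWith K f) (hCK : C + (K:ℝ) ≤ 1) :
    |pairing μ f| ≤ blDualNorm μ :=
  le_csSup (blSet_bdd μ) ⟨f, C, K, hb, hl, hCK, rfl⟩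

lemma blDualNorm_triangle (ρ ν μ₀ : SignedMeasure S) :
    blDualNorm (ρ - μ₀) ≤ blDualNorm (ρ - ν) + blDualNorm (ν - μ₀) := by
  rw [blDualNorm_def]
  refine Real.sSup_le ?_ (add_nonneg (blDualNorm_nonneg _) (blDualNorm_nonneg _))
  rintro r ⟨f, C, K, hb, hl, hCK, rfl⟩
  have hsplit : ρ - μ₀ = (ρ - ν) + (ν - μ₀) := by abel
  rw [hsplit, pairing_add_left _ _ hb hl.continuous]
  calc |pairing (ρ - ν) f + pairing (ν - μ₀) f|
      ≤ |pairing (ρ - ν) f| + |pairing (ν - μ₀) f| := abs_add_le _ _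
    _ ≤ _ := add_le_add (abs_pairing_le_blDualNorm _ hb hl hCK)
        (abs_pairing_le_blDualNorm _ hb hl hCK)

lemma abs_pairing_le_mul_blDualNorm (μ : SignedMeasure S) {f : S → ℝ} {C : ℝ} {K : NNReal}
    (hb : ∀ x, |f x| ≤ C) (hl : LipschitzWith K f) (hC : 0 ≤ C) :
    |pairing μ f| ≤ (C + (K:ℝ)) * blDualNorm μ := by
  set c : ℝ := C + (K:ℝ) with hc
  have hc0 : 0 ≤ c := by positivity
  rcases eq_or_lt_of_le hc0 with h0 | hpos
  · -- c = 0 : C = 0 and K = 0, f ≡ 0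
    have hC0 : C = 0 := by have := K.2; push_cast at h0 ⊢; linarith [NNReal.coe_nonneg K]
    have hf0 : f = fun _ => 0 := funext fun x => abs_nonpos_iff.mp (hC0 ▸ hb x) 
    rw [hf0]
    have hz : pairing μ (fun _ => (0:ℝ)) = 0 := by simp [pairing]
    rw [hz, abs_zero]
    exact mul_nonneg hc0 (blDualNorm_nonneg μ)
  · set g : S → ℝ := fun x => c⁻¹ * f x with hg
    have hgb : ∀ x, |g x| ≤ C / c := fun x => by
      rw [hg]; simp only [abs_mul, abs_inv, abs_of_pos hpos, div_eq_inv_mul]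
      exact mul_le_mul_of_nonneg_left (hb x) (by positivity)
    have hgl : LipschitzWith (⟨c⁻¹, by positivity⟩ * K) g := by
      refine LipschitzWith.of_dist_le_mul fun x y => ?_
      have hd := hl.dist_le_mul x y
      rw [Real.dist_eq] at hd ⊢
      have : g x - g y = c⁻¹ * (f x - f y) := by rw [hg]; ring
      rw [this, abs_mul, abs_inv, abs_of_pos hpos]
      push_cast
      calc c⁻¹ * |f x - f y| ≤ c⁻¹ * ((K:ℝ) * dist x y) := by
            apply mul_le_mul_of_nonneg_left _ (by positivity)
            rwa [← Real.dist_eq]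
        _ = c⁻¹ * (K:ℝ) * dist x y := by ring
    have hsum : C / c + ((⟨c⁻¹, by positivity⟩ * K : NNReal) : ℝ) ≤ 1 := by
      push_cast
      show C / c + c⁻¹ * (K:ℝ) ≤ 1
      rw [div_eq_inv_mul, ← mul_add, ← hc, inv_mul_cancel₀ (ne_of_gt hpos)]
    have hle := abs_pairing_le_blDualNorm μ hgb hgl hsum
    have hpg : pairing μ g = c⁻¹ * pairing μ f := by
      rw [pairing, pairing, hg]
      simp only [integral_const_mul]
      ring
    rw [hpg, abs_mul, abs_inv, abs_of_pos hpos] at hle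
    calc |pairing μ f| = c * (c⁻¹ * |pairing μ f|) := by field_simp
      _ ≤ c * blDualNorm μ := mul_le_mul_of_nonneg_left hle hc0

end BL

lemma net_lemma {S : Type*} [MetricSpace S] {K : Set S} (hK : IsCompact K) {η : ℝ} (hη : 0 < η) :
    ∃ T : Set (S → ℝ), T.Finite ∧ (∀ g ∈ T, (∀ x, |g x| ≤ 1) ∧ LipschitzWith 1 g) ∧
      ∀ f : S → ℝ, (∀ x, |f x| ≤ 1) → LipschitzWith 1 f →
        ∃ g ∈ T, ∀ x ∈ K, |f x - g x| ≤ 3 * η := by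
  obtain ⟨s, hsfin, hscover⟩ := Metric.totallyBounded_iff.mp hK.totallyBounded η hη
  haveI := hsfin.fintype
  set F : Set (S → ℝ) := {f | (∀ x, |f x| ≤ 1) ∧ LipschitzWith 1 f} with hF
  set Φ : (S → ℝ) → (s → ℤ) := fun f x => ⌊f x.1 / η⌋ with hΦ
  set D : Set (s → ℤ) := Φ '' F with hD
  have hDfin : D.Finite := by
    apply Set.Finite.subset (Set.Finite.pi (fun _ : s => Set.finite_Icc ⌊-(1/η)⌋ ⌊1/η⌋))
    rintro d ⟨f, hf, rfl⟩
    intro x _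
    have hax := abs_le.mp (hf.1 x.1)
    constructor
    · apply Int.floor_le_floor
      rw [show -(1/η) = (-1)/η by ring, div_le_div_iff_of_pos_right hη]
      linarith [hax.1]
    · apply Int.floor_le_floor
      rw [div_le_div_iff_of_pos_right hη]
      linarith [hax.2]
  have hchoice : ∀ d ∈ D, ∃ f, f ∈ F ∧ Φ f = d := by
    rintro d ⟨f, hf, rfl⟩; exact ⟨f, hf, rfl⟩
  choose! F' hF'mem hF'eq using hchoice
  refine ⟨F' '' D, hDfin.image _, ?_, ?_⟩
  · rintro g ⟨d, hd, rfl⟩; exact hF'mem d hd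
  · intro f hf1 hfl
    have hfF : f ∈ F := ⟨hf1, hfl⟩
    have hd : Φ f ∈ D := ⟨f, hfF, rfl⟩
    refine ⟨F' (Φ f), ⟨Φ f, hd, rfl⟩, ?_⟩
    set g := F' (Φ f) with hg
    have hgF : g ∈ F := hF'mem _ hd
    have hgeq : Φ g = Φ f := hF'eq _ hd
    intro x hx
    obtain ⟨y, hy, hxy⟩ := Set.mem_iUnion₂.mp (hscover hx)
    rw [Metric.mem_ball] at hxy
    have h1 : |f x - f y| ≤ η := by
      have := hfl.dist_le_mul x y
      rw [Real.dist_eq] at this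
      simp only [NNReal.coe_one, one_mul] at this
      linarith
    have h3 : |g y - g x| ≤ η := by
      have := hgF.2.dist_le_mul y x
      rw [Real.dist_eq] at this
      simp only [NNReal.coe_one, one_mul] at this
      rw [dist_comm] at this
      linarith
    have h2 : |f y - g y| ≤ η := by
      have hfloor : ⌊g y / η⌋ = ⌊f y / η⌋ := congrFun hgeq ⟨y, hy⟩
      have ha1 : f y / η < ⌊f y / η⌋ + 1 := Int.lt_floor_add_one _
      have ha2 : (⌊f y / η⌋ : ℝ) ≤ f y / η := Int.floor_le _
      have hb1 : g y / η < ⌊g y / η⌋ + 1 := Int.lt_floor_add_one _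
      have hb2 : (⌊g y / η⌋ : ℝ) ≤ g y / η := Int.floor_le _
      rw [hfloor] at hb1 hb2
      have : |f y / η - g y / η| ≤ 1 := by rw [abs_le]; constructor <;> linarith
      have heq : f y - g y = η * (f y / η - g y / η) := by field_simp
      rw [heq, abs_mul, abs_of_pos hη]
      calc η * |f y / η - g y / η| ≤ η * 1 := by
            exact mul_le_mul_of_nonneg_left this hη.le
        _ = η := mul_one η
    calc |f x - g x| = |(f x - f y) + (f y - g y) + (g y - g x)| := by ring_nf
      _ ≤ |(f x - f y) + (f y - g y)| + |g y - g x| := abs_add_le _ _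
      _ ≤ |f x - f y| + |f y - g y| + |g y - g x| := by linarith [abs_add_le (f x - f y) (f y - g y)]
      _ ≤ 3 * η := by linarith

lemma int_est {S : Type*} [MeasurableSpace S] [TopologicalSpace S] [BorelSpace S]
    (m : Measure S) [IsFiniteMeasure m] {h : S → ℝ} (hc : Continuous h) {K : Set S}
    (hKm : MeasurableSet K) {a : ℝ} (ha : 0 ≤ a) (hb : ∀ x, |h x| ≤ 2)
    (haK : ∀ x ∈ K, |h x| ≤ a) :
    |∫ x, h x ∂m| ≤ a * (m K).toReal + 2 * (m Kᶜ).toReal := by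
  have hint : Integrable h m := by
    refine ⟨hc.aestronglyMeasurable, ?_⟩
    apply MeasureTheory.HasFiniteIntegral.of_bounded (C := 2)
    filter_upwards with x
    simpa [Real.norm_eq_abs] using hb x
  rw [← integral_add_compl hKm hint]
  have e1 : ‖∫ x in K, h x ∂m‖ ≤ a * (m K).toReal :=
    norm_setIntegral_le_of_norm_le_const (measure_lt_top m K)
      (fun x hx => by simpa [Real.norm_eq_abs] using haK x hx)
  have e2 : ‖∫ x in Kᶜ, h x ∂m‖ ≤ 2 * (m Kᶜ).toReal :=
    norm_setIntegral_le_of_norm_le_const (measure_lt_top m Kᶜ)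
      (fun x _ => by simpa [Real.norm_eq_abs] using hb x)
  rw [Real.norm_eq_abs] at e1 e2
  calc |_ + _| ≤ |∫ x in K, h x ∂m| + |∫ x in Kᶜ, h x ∂m| := abs_add_le _ _
    _ ≤ _ := add_le_add e1 e2

section Key
variable {S : Type*} [MetricSpace S] [MeasurableSpace S] [BorelSpace S]

lemma part_univ_bound_pos (μ : SignedMeasure S) {A : Set S} :
    (μ.toJordanDecomposition.posPart A).toReal ≤ tvNorm μ := by
  rw [tvNorm_eq]
  have h1 : (μ.toJordanDecomposition.posPart A).toReal
      ≤ (μ.toJordanDecomposition.posPart Set.univ).toReal :=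
    ENNReal.toReal_mono (by finiteness) (measure_mono (Set.subset_univ A))
  linarith [ENNReal.toReal_nonneg (a := μ.toJordanDecomposition.negPart Set.univ)]

lemma part_univ_bound_neg (μ : SignedMeasure S) {A : Set S} :
    (μ.toJordanDecomposition.negPart A).toReal ≤ tvNorm μ := by
  rw [tvNorm_eq]
  have h1 : (μ.toJordanDecomposition.negPart A).toReal
      ≤ (μ.toJordanDecomposition.negPart Set.univ).toReal :=
    ENNReal.toReal_mono (by finiteness) (measure_mono (Set.subset_univ A))
  linarith [ENNReal.toReal_nonneg (a := μ.toJordanDecomposition.posPart Set.univ)]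

lemma part_tail_bound_pos (μ : SignedMeasure S) (A : Set S) :
    (μ.toJordanDecomposition.posPart A).toReal ≤ (μ.totalVariation A).toReal := by
  rw [SignedMeasure.totalVariation, Measure.add_apply]
  exact ENNReal.toReal_mono (by finiteness) le_self_add

lemma part_tail_bound_neg (μ : SignedMeasure S) (A : Set S) :
    (μ.toJordanDecomposition.negPart A).toReal ≤ (μ.totalVariation A).toReal := by
  rw [SignedMeasure.totalVariation, Measure.add_apply]
  exact ENNReal.toReal_mono (by finiteness) le_add_self

lemma key_lemma [Nonempty S] (M : Set (SignedMeasure S)) (C : ℝ) (hC0 : 0 ≤ C)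
    (hC : ∀ μ ∈ M, tvNorm μ ≤ C)
    (htight : ∀ ε : ℝ, 0 < ε → ∃ K : Set S, IsCompact K ∧
      ∀ μ ∈ M, ((μ : SignedMeasure S).totalVariation Kᶜ).toReal < ε)
    {ε : ℝ} (hε : 0 < ε) :
    ∃ T : Set (S → ℝ), T.Finite ∧ (∀ g ∈ T, (∀ x, |g x| ≤ 1) ∧ LipschitzWith 1 g) ∧
      ∀ ρ ∈ M, ∀ ν ∈ M, (∀ g ∈ T, |pairing ρ g - pairing ν g| < ε/2) →
        blDualNorm (ρ - ν) < ε := by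
  set η : ℝ := ε / (96 * (C + 1)) with hηdef
  have hη : 0 < η := by positivity
  set ε₀ : ℝ := ε / 64 with hε₀def
  have hε₀ : 0 < ε₀ := by positivity
  obtain ⟨K, hKcomp, hKtight⟩ := htight ε₀ hε₀
  have hKm : MeasurableSet K := hKcomp.isClosed.measurableSet
  obtain ⟨T, hTfin, hTF, hTnet⟩ := net_lemma hKcomp hη
  refine ⟨T, hTfin, hTF, ?_⟩
  intro ρ hρ ν hν hW
  have key3η : 3 * η * C ≤ ε / 32 := by
    have h96 : (0:ℝ) < 96 * (C + 1) := by positivity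
    rw [hηdef, show 3 * (ε / (96 * (C + 1))) * C = (3 * ε * C) / (96 * (C + 1)) by ring,
      div_le_div_iff₀ h96 (by norm_num)]
    nlinarith
  have hmain : ∀ r ∈ {r : ℝ | ∃ (f : S → ℝ) (C : ℝ) (K : NNReal), (∀ x, |f x| ≤ C) ∧
      LipschitzWith K f ∧ C + (K : ℝ) ≤ 1 ∧ r = |pairing (ρ - ν) f|}, r ≤ 3 * ε / 4 := by
    rintro r ⟨f, Cf, Kf, hb, hl, hCK, rfl⟩
    have hCf0 : 0 ≤ Cf := le_trans (abs_nonneg _) (hb (Classical.arbitrary S))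
    have hKf1 : (Kf : ℝ) ≤ 1 := by linarith
    have hf1 : ∀ x, |f x| ≤ 1 := fun x => le_trans (hb x) (by linarith [Kf.coe_nonneg])
    have hflip : LipschitzWith 1 f := hl.weaken (by exact_mod_cast hKf1)
    obtain ⟨g, hgT, hgapprox⟩ := hTnet f hf1 hflip
    obtain ⟨hg1, hgl⟩ := hTF g hgT
    -- h = f - g
    set h : S → ℝ := fun x => f x - g x with hh
    have hhc : Continuous h := hflip.continuous.sub hgl.continuous
    have hhb : ∀ x, |h x| ≤ 2 := fun x => by
      rw [hh]; simp only
      calc |f x - g x| ≤ |f x| + |g x| := abs_sub _ _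
        _ ≤ 2 := by linarith [hf1 x, hg1 x]
    have hhK : ∀ x ∈ K, |h x| ≤ 3 * η := fun x hx => hgapprox x hx
    -- the four integral estimates
    have est : ∀ (m : Measure S) (_ : IsFiniteMeasure m),
        (m K).toReal ≤ C → (m Kᶜ).toReal < ε₀ →
        |∫ x, h x ∂m| ≤ ε / 32 + 2 * ε₀ := by
      intro m hm hmK hmKc
      calc |∫ x, h x ∂m| ≤ 3 * η * (m K).toReal + 2 * (m Kᶜ).toReal :=
            int_est m hhc hKm (by positivity) hhb hhK
        _ ≤ 3 * η * C + 2 * ε₀ := by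
            have h1 : 3 * η * (m K).toReal ≤ 3 * η * C :=
              mul_le_mul_of_nonneg_left hmK (by positivity)
            have h2 : 2 * (m Kᶜ).toReal ≤ 2 * ε₀ := by linarith
            linarith
        _ ≤ ε / 32 + 2 * ε₀ := by linarith
    have eρp := est ρ.toJordanDecomposition.posPart inferInstance
      (le_trans (part_univ_bound_pos ρ) (hC ρ hρ))
      (lt_of_le_of_lt (part_tail_bound_pos ρ Kᶜ) (hKtight ρ hρ))
    have eρn := est ρ.toJordanDecomposition.negPart inferInstance
      (le_trans (part_univ_bound_neg ρ) (hC ρ hρ))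
      (lt_of_le_of_lt (part_tail_bound_neg ρ Kᶜ) (hKtight ρ hρ))
    have eνp := est ν.toJordanDecomposition.posPart inferInstance
      (le_trans (part_univ_bound_pos ν) (hC ν hν))
      (lt_of_le_of_lt (part_tail_bound_pos ν Kᶜ) (hKtight ν hν))
    have eνn := est ν.toJordanDecomposition.negPart inferInstance
      (le_trans (part_univ_bound_neg ν) (hC ν hν))
      (lt_of_le_of_lt (part_tail_bound_neg ν Kᶜ) (hKtight ν hν))
    -- decompose pairing
    have hps : pairing (ρ - ν) f = pairing ρ f - pairing ν f := pairing_sub_left ρ ν hb hl.continuous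
    have hdiff : ∀ μ' : SignedMeasure S, pairing μ' f - pairing μ' g
        = (∫ x, h x ∂μ'.toJordanDecomposition.posPart)
        - ∫ x, h x ∂μ'.toJordanDecomposition.negPart := by
      intro μ'
      rw [pairing, pairing, hh]
      rw [integral_sub (integ_aux hf1 hflip.continuous _) (integ_aux hg1 hgl.continuous _),
        integral_sub (integ_aux hf1 hflip.continuous _) (integ_aux hg1 hgl.continuous _)]
      ring
    have hdρ := hdiff ρ
    have hdν := hdiff ν
    have hWg := hW g hgT
    have habs : |pairing (ρ - ν) f| ≤ |pairing ρ g - pairing ν g|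
        + |∫ x, h x ∂ρ.toJordanDecomposition.posPart| + |∫ x, h x ∂ρ.toJordanDecomposition.negPart|
        + |∫ x, h x ∂ν.toJordanDecomposition.posPart|
        + |∫ x, h x ∂ν.toJordanDecomposition.negPart| := by
      rw [hps]
      have : pairing ρ f - pairing ν f = (pairing ρ g - pairing ν g)
          + ((∫ x, h x ∂ρ.toJordanDecomposition.posPart) - ∫ x, h x ∂ρ.toJordanDecomposition.negPart)
          - ((∫ x, h x ∂ν.toJordanDecomposition.posPart) - ∫ x, h x ∂ν.toJordanDecomposition.negPart) := by
        rw [← hdρ, ← hdν]; ring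
      rw [this]
      have a1 := abs_add_le (pairing ρ g - pairing ν g)
        ((∫ x, h x ∂ρ.toJordanDecomposition.posPart) - ∫ x, h x ∂ρ.toJordanDecomposition.negPart)
      have a2 := abs_sub (∫ x, h x ∂ρ.toJordanDecomposition.posPart)
        (∫ x, h x ∂ρ.toJordanDecomposition.negPart)
      have a3 := abs_sub (∫ x, h x ∂ν.toJordanDecomposition.posPart)
        (∫ x, h x ∂ν.toJordanDecomposition.negPart)
      have a4 := abs_sub ((pairing ρ g - pairing ν g)
          + ((∫ x, h x ∂ρ.toJordanDecomposition.posPart) - ∫ x, h x ∂ρ.toJordanDecomposition.negPart))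
        ((∫ x, h x ∂ν.toJordanDecomposition.posPart) - ∫ x, h x ∂ν.toJordanDecomposition.negPart)
      linarith
    have : |pairing (ρ - ν) f| ≤ ε/2 + 4 * (ε/32 + 2 * ε₀) := by linarith
    rw [hε₀def] at this
    linarith
  rw [show blDualNorm (ρ - ν) = sSup _ from rfl]
  exact lt_of_le_of_lt (Real.sSup_le hmain (by positivity)) (by linarith)
end Key

section Top
variable {S : Type*} [MetricSpace S] [MeasurableSpace S] [BorelSpace S]

lemma top_eq_of_subsingleton {X : Type*} [Subsingleton X] (t₁ t₂ : TopologicalSpace X) :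
    t₁ = t₂ := by
  have hall : ∀ (t : TopologicalSpace X) (U : Set X), IsOpen[t] U := by
    intro t U
    rcases Set.eq_empty_or_nonempty U with rfl | ⟨x, hx⟩
    · exact @isOpen_empty X t
    · have : U = Set.univ := Set.eq_univ_of_forall fun y => (Subsingleton.elim x y ▸ hx)
      rw [this]; exact @isOpen_univ X t
  exact TopologicalSpace.ext (funext fun U => propext ⟨fun _ => hall t₂ U, fun _ => hall t₁ U⟩)

lemma blDualNorm_zero : blDualNorm (0 : SignedMeasure S) = 0 := by
  refine le_antisymm ?_ (blDualNorm_nonneg 0)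
  refine Real.sSup_le ?_ le_rfl
  intro r hr
  have := blSet_le (0 : SignedMeasure S) r hr
  rwa [tvNorm, SignedMeasure.totalVariation_zero, Measure.coe_zero, Pi.zero_apply,
    ENNReal.toReal_zero] at this

lemma normTop_isOpen_of_balls {V : Set (SignedMeasure S)}
    (h : ∀ ν ∈ V, ∃ ε > 0, {ρ | blDualNorm (ρ - ν) < ε} ⊆ V) : IsOpen[normTop S] V := by
  letI := normTop S
  have hV : V = ⋃₀ {B | (∃ (μ : SignedMeasure S) (ε : ℝ), 0 < ε ∧
      B = {ν | blDualNorm (ν - μ) < ε}) ∧ B ⊆ V} := by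
    apply Set.eq_of_subset_of_subset
    · intro ν hν
      obtain ⟨ε, hε, hsub⟩ := h ν hν
      refine ⟨{ρ | blDualNorm (ρ - ν) < ε}, ⟨⟨ν, ε, hε, rfl⟩, hsub⟩, ?_⟩
      simp only [Set.mem_setOf_eq, sub_self, blDualNorm_zero]; exact hε
    · rintro ρ ⟨B, ⟨_, hBV⟩, hρB⟩
      exact hBV hρB
  rw [hV]
  exact isOpen_sUnion fun B hB => TopologicalSpace.isOpen_generateFrom_of_mem hB.1

lemma normTop_exists_ball : ∀ V : Set (SignedMeasure S), IsOpen[normTop S] V →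
    ∀ ν ∈ V, ∃ ε > 0, {ρ | blDualNorm (ρ - ν) < ε} ⊆ V := by
  intro V hV
  have hgen : TopologicalSpace.GenerateOpen
      {B | ∃ (μ : SignedMeasure S) (ε : ℝ), 0 < ε ∧ B = {ν | blDualNorm (ν - μ) < ε}} V := hV
  clear hV
  induction hgen with
  | basic B hB =>
    obtain ⟨μ₀, ε', hε', rfl⟩ := hB
    intro ν hν
    simp only [Set.mem_setOf_eq] at hν
    refine ⟨ε' - blDualNorm (ν - μ₀), by linarith, ?_⟩
    intro ρ hρ
    simp only [Set.mem_setOf_eq] at hρ ⊢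
    have := blDualNorm_triangle ρ ν μ₀
    linarith
  | univ => exact fun ν _ => ⟨1, one_pos, Set.subset_univ _⟩
  | inter U W _ _ ihU ihW =>
    intro ν hν
    obtain ⟨εU, hεU, hsubU⟩ := ihU ν hν.1
    obtain ⟨εW, hεW, hsubW⟩ := ihW ν hν.2
    refine ⟨min εU εW, lt_min hεU hεW, fun ρ hρ => ?_⟩
    simp only [Set.mem_setOf_eq, lt_min_iff] at hρ
    exact ⟨hsubU hρ.1, hsubW hρ.2⟩
  | sUnion Us _ ih =>
    intro ν hν
    obtain ⟨U, hUmem, hνU⟩ := hν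
    obtain ⟨ε, hε, hsub⟩ := ih U hUmem ν hνU
    exact ⟨ε, hε, hsub.trans (Set.subset_sUnion_of_mem hUmem)⟩

lemma normTop_le_weakTop [Nonempty S] : normTop S ≤ weakTop S := by
  refine le_iInf fun f => ?_
  obtain ⟨⟨Cf, hb⟩, ⟨Kf, hl⟩⟩ := f.2
  have hCf0 : 0 ≤ Cf := le_trans (abs_nonneg _) (hb (Classical.arbitrary S))
  rw [← continuous_iff_le_induced (t₁ := normTop S)]
  letI := normTop S
  rw [continuous_def]
  intro U hU
  apply normTop_isOpen_of_balls
  intro ν hν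
  obtain ⟨r, hr, hball⟩ := Metric.isOpen_iff.mp hU _ hν
  refine ⟨r / (Cf + (Kf:ℝ) + 1), by positivity, ?_⟩
  intro ρ hρ
  simp only [Set.mem_setOf_eq] at hρ
  apply hball
  rw [Metric.mem_ball, Real.dist_eq]
  have h1 : |pairing ρ f.1 - pairing ν f.1| = |pairing (ρ - ν) f.1| := by
    rw [pairing_sub_left ρ ν hb hl.continuous]
  rw [h1]
  have h2 := abs_pairing_le_mul_blDualNorm (ρ - ν) hb hl hCf0
  have h3 := blDualNorm_nonneg (ρ - ν)
  have hK0 := Kf.coe_nonneg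
  have hD1 : (0:ℝ) < Cf + (Kf:ℝ) + 1 := by positivity
  have h4 : (Cf + (Kf:ℝ)) * blDualNorm (ρ - ν) ≤ (Cf + (Kf:ℝ)) * (r / (Cf + (Kf:ℝ) + 1)) :=
    mul_le_mul_of_nonneg_left hρ.le (by positivity)
  have h5 : (Cf + (Kf:ℝ)) * (r / (Cf + (Kf:ℝ) + 1)) < r := by
    rw [mul_div_assoc', div_lt_iff₀ hD1]
    nlinarith
  linarith

end Top

/-- If `M ⊆ M(S)` is bounded in total variation norm and uniformly tight, then the
`σ(M(S), BL(S))`-weak topology and the `‖·‖*_BL`-norm topology coincide on `M`. -/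
theorem coincidence_of_topologies_of_tight {S : Type*} [MetricSpace S] [CompleteSpace S]
    [TopologicalSpace.SeparableSpace S] [MeasurableSpace S] [BorelSpace S]
    (M : Set (SignedMeasure S)) (hTV : ∃ C : ℝ, ∀ μ ∈ M, tvNorm μ ≤ C)
    (htight : ∀ ε : ℝ, 0 < ε → ∃ K : Set S, IsCompact K ∧
      ∀ μ ∈ M, ((μ : SignedMeasure S).totalVariation Kᶜ).toReal < ε) :
    TopologicalSpace.induced ((↑) : M → SignedMeasure S) (weakTop S) =
      TopologicalSpace.induced ((↑) : M → SignedMeasure S) (normTop S) := by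
  rcases isEmpty_or_nonempty S with hS | hS
  · haveI : Subsingleton (SignedMeasure S) :=
      ⟨fun μ ν => VectorMeasure.ext fun i _ => by
        rw [Set.eq_empty_of_isEmpty i, VectorMeasure.empty, VectorMeasure.empty]⟩
    exact top_eq_of_subsingleton _ _
  obtain ⟨C₀, hC₀⟩ := hTV
  set C : ℝ := max C₀ 0 with hCdef
  have hC0 : 0 ≤ C := le_max_right _ _
  have hC : ∀ μ ∈ M, tvNorm μ ≤ C := fun μ hμ => le_trans (hC₀ μ hμ) (le_max_left _ _)
  refine le_antisymm ?_ (induced_mono normTop_le_weakTop)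
  -- hard direction: every normTop-induced open is weakTop-induced open
  intro U hU
  rw [@isOpen_induced_iff _ _ (normTop S)] at hU
  rw [@isOpen_induced_iff _ _ (weakTop S)]
  obtain ⟨V, hV, rfl⟩ := hU
  -- for each point, find a weak-open neighborhood contained in V (relative to M)
  have hclaim : ∀ p : M, (p : SignedMeasure S) ∈ V →
      ∃ W : Set (SignedMeasure S), IsOpen[weakTop S] W ∧ (p : SignedMeasure S) ∈ W ∧
        ∀ q : M, (q : SignedMeasure S) ∈ W → (q : SignedMeasure S) ∈ V := by
    rintro ⟨ν, hνM⟩ hνV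
    obtain ⟨ε, hε, hball⟩ := normTop_exists_ball V hV ν hνV
    obtain ⟨T, hTfin, hTF, hTkey⟩ := key_lemma M C hC0 hC htight hε
    refine ⟨⋂ g ∈ T, (fun ρ : SignedMeasure S => pairing ρ g) ⁻¹'
        Metric.ball (pairing ν g) (ε/2), ?_, ?_, ?_⟩
    · letI := weakTop S
      apply hTfin.isOpen_biInter
      intro g hg
      obtain ⟨hg1, hgl⟩ := hTF g hg
      have hBL : IsBL g := ⟨⟨1, hg1⟩, ⟨1, hgl⟩⟩
      have hle : weakTop S ≤ TopologicalSpace.induced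
          (fun μ : SignedMeasure S => pairing μ g) inferInstance :=
        iInf_le _ (⟨g, hBL⟩ : {g : S → ℝ // IsBL g})
      exact IsOpen.mono (isOpen_induced Metric.isOpen_ball) hle
    · simp only [Set.mem_iInter, Set.mem_preimage]
      intro g _
      simp only [Metric.mem_ball, dist_self]
      linarith
    · rintro ⟨ρ, hρM⟩ hρW
      simp only [Set.mem_iInter, Set.mem_preimage, Metric.mem_ball, Real.dist_eq] at hρW
      have := hTkey ρ hρM ν hνM fun g hg => hρW g hg
      exact hball this
  choose! W hWopen hWmem hWsub using hclaim
  refine ⟨⋃ p : M, ⋃ (_ : (p : SignedMeasure S) ∈ V), W p, ?_, ?_⟩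
  · letI := weakTop S
    exact isOpen_iUnion fun p => isOpen_iUnion fun hp => hWopen p hp
  · apply Set.eq_of_subset_of_subset
    · rintro q hq
      simp only [Set.mem_preimage, Set.mem_iUnion] at hq
      obtain ⟨p, hpV, hqW⟩ := hq
      exact hWsub p hpV q hqW
    · intro q hq
      simp only [Set.mem_preimage, Set.mem_iUnion]
      exact ⟨q, hq, hWmem q hq⟩
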